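/- Let F be the set of 3×3 real matrices of the form [[x₁₁,0,0],[x₂₁,x₂₂,0],[x₃₁,0,x₂₂]] with x₁₁, x₂₂ > 0. Then for every g ∈ GL₃(ℝ) there exist φ ∈ F, k ∈ O(3), and reals a₃₂ ∈ ℝ, a₃₃ > 0 such that φ g k = [[1,0,0],[0,1,0],[0,a₃₂,a₃₃]]. -/

import Mathlib

open Matrix

theorem aux_posdef (g : Matrix (Fin 3) (Fin 3) ℝ) (hg : IsUnit g.det) :
    (g * gᵀ).PosDef := by
  have hgT : IsUnit gᵀ := (Matrix.isUnit_iff_isUnit_det _).2 (by rwa [det_transpose])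
  refine Matrix.PosDef.of_dotProduct_mulVec_pos ?_ ?_
  · simp [Matrix.IsHermitian, conjTranspose_eq_transpose_of_trivial, transpose_mul]
  · intro x hx
    have hinj := Matrix.mulVec_injective_iff_isUnit.mpr hgT
    have hy : gᵀ *ᵥ x ≠ 0 := by
      intro h
      exact hx (hinj (h.trans (Matrix.mulVec_zero _).symm))
    have : star x ⬝ᵥ ((g * gᵀ) *ᵥ x) = star (gᵀ *ᵥ x) ⬝ᵥ (gᵀ *ᵥ x) := by
      rw [← mulVec_mulVec, dotProduct_mulVec, star_trivial, star_trivial, mulVec_transpose]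
    rw [this]
    exact (Matrix.dotProduct_star_self_pos_iff).2 hy

/-- Existence of a lower-triangular `W` conjugating `g * gᵀ` to a positive diagonal matrix. -/
theorem aux_W (g : Matrix (Fin 3) (Fin 3) ℝ) (hg : IsUnit g.det) :
    ∃ (W : Matrix (Fin 3) (Fin 3) ℝ) (D : Fin 3 → ℝ),
      W 0 1 = 0 ∧ W 0 2 = 0 ∧ W 1 2 = 0 ∧ W.det ≠ 0 ∧ (∀ i, 0 < D i) ∧
      Matrix.diagonal D = W * (g * gᵀ) * Wᵀ := by
  letI : WellFoundedLT (Fin 3) := inferInstance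
  have hS := aux_posdef g hg
  obtain ⟨iW, hiW, hWi⟩ := LDL.invertibleLowerInv hS
  have hWi' : LDL.lowerInv hS * iW = (1 : Matrix (Fin 3) (Fin 3) ℝ) := by
    convert hWi using 2
  have hu : (LDL.lowerInv hS).det ≠ 0 := by
    intro h0
    have h2 := congrArg Matrix.det hWi'
    rw [Matrix.det_mul, h0, zero_mul, Matrix.det_one] at h2
    exact zero_ne_one h2
  refine ⟨LDL.lowerInv hS, LDL.diagEntries hS,
    LDL.lowerInv_triangular hS (by decide), LDL.lowerInv_triangular hS (by decide),
    LDL.lowerInv_triangular hS (by decide), ?_, ?_, ?_⟩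
  · exact hu
  · intro i
    have hrow : LDL.lowerInv hS i ≠ 0 := by
      intro h
      have hdet0 := Matrix.det_eq_zero_of_row_eq_zero (A := LDL.lowerInv hS) i
        (fun j => congrFun h j)
      exact hu hdet0
    have h1 : LDL.diagEntries hS i
        = star (star (LDL.lowerInv hS i)) ⬝ᵥ ((g * gᵀ) *ᵥ star (LDL.lowerInv hS i)) := by
      simp only [LDL.diagEntries, EuclideanSpace.inner_toLp_toLp]; exact dotProduct_comm _ _
    rw [h1, star_trivial, star_trivial]
    exact hS.dotProduct_mulVec_pos hrow
  · have h := LDL.diag_eq_lowerInv_conj hS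
    rw [conjTranspose_eq_transpose_of_trivial] at h
    unfold LDL.diag at h
    convert h using 2

/-- LQ decomposition from the conjugation data. -/
theorem aux_LQ (g W : Matrix (Fin 3) (Fin 3) ℝ) (D : Fin 3 → ℝ)
    (h01 : W 0 1 = 0) (h02 : W 0 2 = 0) (h12 : W 1 2 = 0) (hWdet : W.det ≠ 0)
    (hD : ∀ i, 0 < D i) (hdiag : Matrix.diagonal D = W * (g * gᵀ) * Wᵀ) :
    ∃ (l11 l21 l22 l31 l32 l33 : ℝ) (Q : Matrix (Fin 3) (Fin 3) ℝ),
      0 < l11 ∧ 0 < l22 ∧ 0 < l33 ∧ Q * Qᵀ = 1 ∧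
      g = !![l11,0,0; l21,l22,0; l31,l32,l33] * Q := by
  set A := W * g with hAdef
  have hA : A * Aᵀ = Matrix.diagonal D := by
    rw [hdiag, hAdef, transpose_mul]
    noncomm_ring
  set a := W 0 0 with ha
  set b := W 1 0 with hb
  set c := W 1 1 with hc
  set d := W 2 0 with hd
  set e := W 2 1 with he
  set f := W 2 2 with hf
  have hdet3 : W.det = a * c * f := by
    rw [Matrix.det_fin_three, h01, h02, h12]; ring
  have hane : a ≠ 0 := fun h => hWdet (by rw [hdet3, h]; ring)
  have hcne : c ≠ 0 := fun h => hWdet (by rw [hdet3, h]; ring)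
  have hfne : f ≠ 0 := fun h => hWdet (by rw [hdet3, h]; ring)
  have hWii : ∀ i, W i i ≠ 0 := by
    intro i
    fin_cases i
    · exact hane
    · exact hcne
    · exact hfne
  -- signed square roots
  set s : Fin 3 → ℝ := fun i => if 0 < W i i then Real.sqrt (D i) else -Real.sqrt (D i) with hs
  have hsq : ∀ i, s i * s i = D i := by
    intro i
    have := Real.mul_self_sqrt (hD i).le
    by_cases h : 0 < W i i <;> simp [hs, h, this]
  have hsne : ∀ i, s i ≠ 0 := by
    intro i h
    have := hsq i
    rw [h, mul_zero] at this
    exact (hD i).ne this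
  have hsi : ∀ i, 0 < (W i i)⁻¹ * s i := by
    intro i
    have hsqrt : 0 < Real.sqrt (D i) := Real.sqrt_pos.2 (hD i)
    rcases lt_trichotomy (W i i) 0 with h | h | h
    · have h2 : (W i i)⁻¹ < 0 := inv_lt_zero.2 h
      have h3 : ¬ 0 < W i i := not_lt.2 h.le
      simp only [hs, if_neg h3]
      nlinarith
    · exact absurd h (hWii i)
    · simp only [hs, if_pos h]
      positivity
  -- explicit inverse of W
  set V : Matrix (Fin 3) (Fin 3) ℝ :=
    !![a⁻¹, 0, 0; -b/(a*c), c⁻¹, 0; (b*e - c*d)/(a*c*f), -e/(c*f), f⁻¹] with hV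
  have hVW : V * W = 1 := by
    ext i j
    fin_cases i <;> fin_cases j <;>
      simp [hV, Matrix.mul_apply, Fin.sum_univ_three, h01, h02, h12, Matrix.one_apply,
        ← ha, ← hb, ← hc, ← hd, ← he, ← hf] <;>
      field_simp <;> ring
  -- Q
  set Q := Matrix.diagonal (fun i => (s i)⁻¹) * A with hQ
  have hQA : Matrix.diagonal s * Q = A := by
    rw [hQ, ← Matrix.mul_assoc, Matrix.diagonal_mul_diagonal]
    have h1 : (fun i => s i * (s i)⁻¹) = fun _ : Fin 3 => (1:ℝ) := by
      funext i; exact mul_inv_cancel₀ (hsne i)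
    rw [h1, Matrix.diagonal_one, Matrix.one_mul]
  have hQQ : Q * Qᵀ = 1 := by
    rw [hQ, Matrix.transpose_mul, Matrix.diagonal_transpose, Matrix.mul_assoc,
      ← Matrix.mul_assoc A, hA, Matrix.diagonal_mul_diagonal, Matrix.diagonal_mul_diagonal]
    have h1 : (fun i => (s i)⁻¹ * (D i * (s i)⁻¹)) = fun _ : Fin 3 => (1:ℝ) := by
      funext i
      rw [← hsq i]
      field_simp
      rw [div_self (hsne i)]
    rw [h1, Matrix.diagonal_one]
  refine ⟨a⁻¹ * s 0, -b/(a*c) * s 0, c⁻¹ * s 1, (b*e - c*d)/(a*c*f) * s 0, -e/(c*f) * s 1,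
    f⁻¹ * s 2, Q, hsi 0, hsi 1, hsi 2, hQQ, ?_⟩
  have hLVs : !![a⁻¹ * s 0, 0, 0; -b/(a*c) * s 0, c⁻¹ * s 1, 0;
      (b*e - c*d)/(a*c*f) * s 0, -e/(c*f) * s 1, f⁻¹ * s 2]
      = V * Matrix.diagonal s := by
    ext i j
    fin_cases i <;> fin_cases j <;>
      simp [hV, Matrix.mul_diagonal]
  rw [hLVs, Matrix.mul_assoc, hQA, hAdef, ← Matrix.mul_assoc, hVW, Matrix.one_mul]

/-- For every g ∈ GL₃(ℝ) there are φ ∈ F, k ∈ O(3) and a₃₂ ∈ ℝ, a₃₃ > 0 with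
    φ g k = [[1,0,0],[0,1,0],[0,a₃₂,a₃₃]]. -/
theorem representatives_lemma (g : Matrix (Fin 3) (Fin 3) ℝ) (hg : IsUnit g.det) :
    ∃ (φ k : Matrix (Fin 3) (Fin 3) ℝ) (a32 a33 : ℝ),
      (∃ x11 x21 x22 x31 : ℝ, 0 < x11 ∧ 0 < x22 ∧
        φ = !![x11,0,0; x21,x22,0; x31,0,x22]) ∧
      k * kᵀ = 1 ∧
      0 < a33 ∧
      φ * g * k = !![1,0,0; 0,1,0; 0,a32,a33] := by
  obtain ⟨W, D, h01, h02, h12, hWdet, hD, hdiag⟩ := aux_W g hg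
  obtain ⟨l11, l21, l22, l31, l32, l33, Q, hl11, hl22, hl33, hQQ, hgLQ⟩ :=
    aux_LQ g W D h01 h02 h12 hWdet hD hdiag
  refine ⟨!![l11⁻¹, 0, 0; -l21/(l11*l22), l22⁻¹, 0; -l31/(l11*l22), 0, l22⁻¹], Qᵀ,
    l32/l22, l33/l22,
    ⟨l11⁻¹, -l21/(l11*l22), l22⁻¹, -l31/(l11*l22), by positivity, by positivity, rfl⟩,
    by rw [Matrix.transpose_transpose]; exact mul_eq_one_comm.mp hQQ,
    by positivity, ?_⟩
  rw [hgLQ, ← Matrix.mul_assoc, Matrix.mul_assoc _ Q, hQQ, Matrix.mul_one]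
  have h11 := hl11.ne'
  have h22 := hl22.ne'
  ext i j
  fin_cases i <;> fin_cases j <;>
    simp [Matrix.mul_apply, Fin.sum_univ_three, Matrix.vecHead, Matrix.vecTail] <;>
    field_simp <;> ring
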